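/- Let S be a commutative local ring with involution * in which 2 is a unit, 𝔦 a proper *-invariant ideal, and V free of rank 2m over S with nondegenerate skew hermitian form admitting a symplectic basis. Let Ṽ = V/𝔦V with the induced skew hermitian form over S̃ = S/𝔦. If ũ is a basis vector of Ṽ with h̃(ũ,ũ) = 0, then there exists a basis vector w of V with h(w,w) = 0 whose image in Ṽ is ũ. -/

import Mathlib

variable {S V : Type*} [CommRing S] [StarRing S] [AddCommGroup V] [Module S V]

/-- `b` is a symplectic basis for the skew hermitian form `h`. -/
def IsSympBasis {m : ℕ} (h : V →ₛₗ[starRingEnd S] V →ₗ[S] S)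
    (b : Module.Basis (Fin m ⊕ Fin m) S V) : Prop :=
  (∀ i j, h (b (.inl i)) (b (.inr j)) = if i = j then 1 else 0) ∧
  (∀ i j, h (b (.inl i)) (b (.inl j)) = 0) ∧
  (∀ i j, h (b (.inr i)) (b (.inr j)) = 0)

/-- `v` is a basis vector of the free module `V` of rank `2m`. -/
def IsBasisVector (S : Type*) {V : Type*} [CommRing S] [AddCommGroup V] [Module S V]
    (m : ℕ) (v : V) : Prop :=
  ∃ (c : Module.Basis (Fin m ⊕ Fin m) S V) (i : Fin m ⊕ Fin m), c i = v

/-- Determinant of a basis with one vector replaced. -/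
lemma det_update_basis {R M ι : Type*} [CommRing R] [AddCommGroup M] [Module R M]
    [Fintype ι] [DecidableEq ι] (b : Module.Basis ι R M) (x : M) (i : ι) :
    b.det (Function.update ⇑b i x) = b.repr x i := by
  have h1 : b.det (Function.update ⇑b i x)
      = b.det.toMultilinearMap (Function.update ⇑b i x) := rfl
  rw [h1]
  conv_lhs => rw [← b.sum_repr x]
  rw [b.det.toMultilinearMap.map_update_sum]
  rw [Finset.sum_eq_single i]
  · rw [MultilinearMap.map_update_smul, Function.update_eq_self]
    rw [show b.det.toMultilinearMap ⇑b = b.det ⇑b from rfl, b.det_self,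
      smul_eq_mul, mul_one]
  · intro j _ hj
    rw [MultilinearMap.map_update_smul]
    rw [show b.det.toMultilinearMap (Function.update ⇑b i (b j))
        = b.det (Function.update ⇑b i (b j)) from rfl,
      b.det.map_eq_zero_of_eq (Function.update ⇑b i (b j))
        (show Function.update ⇑b i (b j) i = Function.update ⇑b i (b j) j by
          simp [Function.update_apply, hj.symm])
        (Ne.symm hj), smul_zero]
  · simp

/-- If the `i`-th coordinate of `x` with respect to a basis is a unit, then
`x` can replace the `i`-th basis vector. -/
lemma exists_basis_eq {R M ι : Type*} [CommRing R] [AddCommGroup M] [Module R M]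
    [Fintype ι] [DecidableEq ι] (b : Module.Basis ι R M) (x : M) (i : ι)
    (hx : IsUnit (b.repr x i)) : ∃ c : Module.Basis ι R M, c i = x := by
  have hdet : IsUnit (b.det (Function.update ⇑b i x)) := by
    rw [det_update_basis]; exact hx
  obtain ⟨hli, hsp⟩ := (Module.Basis.is_basis_iff_det b).mpr hdet
  exact ⟨Module.Basis.mk hli hsp.ge, by rw [Module.Basis.coe_mk, Function.update_self]⟩


/-- lifting basis vectors of length zero along the reduction
`V → Ṽ = V/𝔦V`, where `𝔦` is a proper `*`-invariant ideal of `S`.  If the image `ũ`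
of `u` is a basis vector of `Ṽ` over `S̃ = S/𝔦` and `h̃(ũ,ũ) = 0` (i.e. `h(u,u) ∈ 𝔦`),
then there is a basis vector `w` of `V` with `h(w,w) = 0` mapping to `ũ`. -/
theorem stmt19 [IsLocalRing S] {m : ℕ} (h2 : IsUnit (2 : S))
    (h : V →ₛₗ[starRingEnd S] V →ₗ[S] S)
    (hskew : ∀ x y, star (h x y) = - h y x)
    (hnd : ∀ x, (∀ y, h x y = 0) → x = 0)
    (b : Module.Basis (Fin m ⊕ Fin m) S V) (hb : IsSympBasis h b)
    (𝔦 : Ideal S) (hproper : 𝔦 ≠ ⊤) (hstar : ∀ s ∈ 𝔦, star s ∈ 𝔦)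
    (u : V) (hlen : h u u ∈ 𝔦)
    (hbu : ∃ (c : Module.Basis (Fin m ⊕ Fin m) (S ⧸ 𝔦)
        (V ⧸ (𝔦 • ⊤ : Submodule S V))) (i : Fin m ⊕ Fin m),
        c i = Submodule.Quotient.mk u) :
    ∃ w : V, IsBasisVector S m w ∧ h w w = 0 ∧
      (Submodule.Quotient.mk w : V ⧸ (𝔦 • ⊤ : Submodule S V)) =
        Submodule.Quotient.mk u := by
  obtain ⟨c, i0, hc⟩ := hbu
  have hile : 𝔦 ≤ IsLocalRing.maximalIdeal S := IsLocalRing.le_maximalIdeal hproper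
  -- Step 1: some coordinate of `u` is a unit.
  obtain ⟨i, hui⟩ : ∃ i, IsUnit (b.repr u i) := by
    by_contra hno
    push_neg at hno
    have hmem : ∀ j, b.repr u j ∈ IsLocalRing.maximalIdeal S := fun j =>
      (IsLocalRing.mem_maximalIdeal _).mpr (mem_nonunits_iff.mpr (hno j))
    choose t ht using fun j => Ideal.Quotient.mk_surjective
      (c.coord i0 (Submodule.Quotient.mk (b j) : V ⧸ (𝔦 • ⊤ : Submodule S V)))
    have hmk : (Submodule.Quotient.mk u : V ⧸ (𝔦 • ⊤ : Submodule S V)) =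
        ∑ j, (Ideal.Quotient.mk 𝔦 (b.repr u j)) •
          (Submodule.Quotient.mk (b j) : V ⧸ (𝔦 • ⊤ : Submodule S V)) := by
      conv_lhs => rw [← b.sum_repr u]
      rw [show (Submodule.Quotient.mk (∑ j, b.repr u j • b j) : V ⧸ (𝔦 • ⊤ : Submodule S V))
          = Submodule.mkQ (𝔦 • ⊤ : Submodule S V) (∑ j, b.repr u j • b j) from rfl,
        map_sum]
      rfl
    have key : Ideal.Quotient.mk 𝔦 (∑ j, b.repr u j * t j) = 1 := by
      have h1 : c.coord i0 (Submodule.Quotient.mk u : V ⧸ (𝔦 • ⊤ : Submodule S V)) = 1 := by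
        rw [← hc]; simp
      rw [map_sum, ← h1, hmk, map_sum]
      refine Finset.sum_congr rfl fun j _ => ?_
      rw [map_smul, map_mul, ht j, smul_eq_mul]
    have hsub : ∑ j, b.repr u j * t j - 1 ∈ 𝔦 :=
      Ideal.Quotient.eq.mp (key.trans (map_one (Ideal.Quotient.mk 𝔦)).symm)
    have hsum : ∑ j, b.repr u j * t j ∈ IsLocalRing.maximalIdeal S :=
      Ideal.sum_mem _ fun j _ => Ideal.mul_mem_right _ _ (hmem j)
    have h1m : (1 : S) ∈ IsLocalRing.maximalIdeal S := by
      have := sub_mem hsum (hile hsub)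
      simpa using this
    exact (Ideal.ne_top_iff_one _).mp (IsLocalRing.maximalIdeal.isMaximal S).ne_top h1m
  -- Step 2: expansion of `h u ·` along the basis.
  have hrepr : ∀ y, h u y = ∑ j, star (b.repr u j) * h (b j) y := by
    intro y
    conv_lhs => rw [← b.sum_repr u]
    rw [map_sum, LinearMap.sum_apply]
    refine Finset.sum_congr rfl fun j _ => ?_
    rw [map_smulₛₗ, LinearMap.smul_apply, smul_eq_mul, starRingEnd_apply]
  obtain ⟨hb1, hb2, hb3⟩ := hb
  have hinr : ∀ k, h u (b (.inr k)) = star (b.repr u (Sum.inl k)) := by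
    intro k
    rw [hrepr, Fintype.sum_sum_type]
    simp [hb1, hb3, mul_ite, Finset.sum_ite_eq']
  have hinl : ∀ k, h u (b (.inl k)) = -star (b.repr u (Sum.inr k)) := by
    intro k
    have hswap : ∀ j, h (b (Sum.inr j)) (b (Sum.inl k)) = -(if k = j then 1 else 0) := by
      intro j
      have hs := hskew (b (Sum.inl k)) (b (Sum.inr j))
      rw [hb1] at hs
      have : h (b (Sum.inr j)) (b (Sum.inl k)) = -star (if k = j then 1 else 0) := by
        rw [hs]; ring
      rw [this]
      by_cases hkj : k = j <;> simp [hkj]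
    rw [hrepr, Fintype.sum_sum_type]
    simp [hb2, hswap, mul_ite, Finset.sum_ite_eq']
  -- Step 3: a companion vector `v` with `h u v = 1`, `h v v = 0`.
  obtain ⟨j', hj'diag, hj'unit⟩ :
      ∃ j', h (b j') (b j') = 0 ∧ IsUnit (h u (b j')) := by
    cases i with
    | inl k => exact ⟨Sum.inr k, hb3 k k, by rw [hinr]; exact hui.star⟩
    | inr k => exact ⟨Sum.inl k, hb2 k k, by rw [hinl]; exact hui.star.neg⟩
  set e : S := h u (b j') with he
  set v : V := (↑hj'unit.unit⁻¹ : S) • b j' with hv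
  have huv : h u v = 1 := by
    rw [hv, map_smul, smul_eq_mul, ← he, IsUnit.val_inv_mul]
  have hvv : h v v = 0 := by
    simp [hv, hj'diag]
  have hvu : h v u = -1 := by
    have hs := hskew u v
    rw [huv, star_one] at hs
    linear_combination hs
  -- Step 4: half of 2.
  obtain ⟨t, ht2⟩ : ∃ t : S, 2 * t = 1 := ⟨↑h2.unit⁻¹, h2.mul_val_inv⟩
  have hstart : star t = t := by
    have h2' : (2 : S) * star t = 1 := by
      have := congrArg star ht2
      rwa [star_mul', star_ofNat, star_one] at this
    calc star t = (2 * t) * star t := by rw [ht2, one_mul]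
      _ = t * (2 * star t) := by ring
      _ = t := by rw [h2', mul_one]
  have hstaru : star (h u u) = -(h u u) := hskew u u
  have hsa : star (-(h u u * t)) = h u u * t := by
    rw [star_neg, star_mul', hstart, hstaru]; ring
  have hai : -(h u u * t) ∈ 𝔦 := neg_mem (Ideal.mul_mem_right t 𝔦 hlen)
  set a : S := -(h u u * t) with ha
  set w : V := u + a • v with hw
  have hww : h w w = 0 := by
    rw [hw, ha]
    simp only [map_add, LinearMap.add_apply, map_smulₛₗ, LinearMap.smul_apply,
      map_smul, smul_eq_mul, starRingEnd_apply, RingHom.id_apply, huv, hvv, hvu, hsa,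
      star_neg, star_mul', hstart, hstaru]
    linear_combination (-(h u u)) * ht2
  have hwu : (Submodule.Quotient.mk w : V ⧸ (𝔦 • ⊤ : Submodule S V)) =
      Submodule.Quotient.mk u := by
    rw [Submodule.Quotient.eq]
    have : w - u = a • v := by rw [hw]; abel
    rw [this]
    exact Submodule.smul_mem_smul hai Submodule.mem_top
  have hwi : IsUnit (b.repr w i) := by
    have hrw : b.repr w i = b.repr u i + a * b.repr v i := by
      rw [hw, map_add, map_smul]; rfl
    by_contra hnu
    have hmm : b.repr w i ∈ IsLocalRing.maximalIdeal S :=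
      (IsLocalRing.mem_maximalIdeal _).mpr (mem_nonunits_iff.mpr hnu)
    have : b.repr u i ∈ IsLocalRing.maximalIdeal S := by
      have := sub_mem hmm (Ideal.mul_mem_right (b.repr v i) _ (hile hai))
      rw [hrw] at this
      simpa using this
    exact mem_nonunits_iff.mp ((IsLocalRing.mem_maximalIdeal _).mp this) hui
  obtain ⟨c', hc'⟩ := exists_basis_eq b w i hwi
  exact ⟨w, ⟨c', i, hc'⟩, hww, hwu⟩
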